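/- If T(t₀) + I(t₀) ≤ T̃₀ and V(t₀) ≤ λ₀, where λ₀ = max{V(t₀), (1-ε)·p·T̃₀/c}, then any solution (T, I, V) of the HCV system on [t₀, ∞) with positive values satisfies T(t) + I(t) ≤ T̃₀ and V(t) ≤ λ₀ for all t ≥ t₀; that is, the set Ω = {(T, I, V) : 0 < T + I ≤ T̃₀, 0 < V ≤ λ₀} is positively invariant for the system. -/

import Mathlib

open Set

/-- `(T, I, V)` is a solution of the HCV system on the set `U`. -/
def hcvSol (s rT rI dT dI Tmax β p q c η ε : ℝ)
    (T I V : ℝ → ℝ) (U : Set ℝ) : Prop :=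
  ∀ t ∈ U,
    HasDerivWithinAt T
      (s + rT * T t * (1 - (T t + I t) / Tmax) - dT * T t
        - (1 - η) * β * V t * T t + q * I t) U t ∧
    HasDerivWithinAt I
      (rI * I t * (1 - (T t + I t) / Tmax) + (1 - η) * β * V t * T t
        - dI * I t - q * I t) U t ∧
    HasDerivWithinAt V ((1 - ε) * p * I t - c * V t) U t

/-- The constant `T̃₀` bounding the total hepatocyte population. -/
noncomputable def hcvTtilde (s rT rI dT Tmax : ℝ) : ℝ :=
  Tmax / (2 * rI) * (Real.sqrt ((rT - dT) ^ 2 + 4 * s * rI / Tmax) + rT - dT)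

/-- The set `Ω = {(T,I,V) : 0 < T + I ≤ T̃₀, 0 < V ≤ λ₀}` is positively
invariant for the HCV system. -/
theorem hcv_invariant_set
    (s rT rI dT dI Tmax β p q c η ε : ℝ)
    (hs : 0 < s) (hrT : 0 < rT) (hrI : 0 < rI) (hdT : 0 < dT) (hdI : 0 < dI)
    (hTmax : 0 < Tmax) (hβ : 0 < β) (hp : 0 < p) (hq : 0 < q) (hc : 0 < c)
    (hη : η ∈ Set.Ico (0 : ℝ) 1) (hε : ε ∈ Set.Ico (0 : ℝ) 1)
    (hrIT : rI ≤ rT) (hsT : s ≤ dT * Tmax) (hdTI : dT ≤ dI)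
    (t₀ : ℝ) (T I V : ℝ → ℝ)
    (hsol : hcvSol s rT rI dT dI Tmax β p q c η ε T I V (Ici t₀))
    (hpos : ∀ t ∈ Ici t₀, 0 < T t ∧ 0 < I t ∧ 0 < V t)
    (hTI₀ : T t₀ + I t₀ ≤ hcvTtilde s rT rI dT Tmax)
    (hV₀ : V t₀ ≤ max (V t₀) ((1 - ε) * p * hcvTtilde s rT rI dT Tmax / c)) :
    ∀ t ∈ Ici t₀,
      T t + I t ≤ hcvTtilde s rT rI dT Tmax ∧
      V t ≤ max (V t₀) ((1 - ε) * p * hcvTtilde s rT rI dT Tmax / c) := by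
  obtain ⟨hη0, hη1⟩ := hη
  obtain ⟨hε0, hε1⟩ := hε
  set u : ℝ := Real.sqrt ((rT - dT) ^ 2 + 4 * s * rI / Tmax) with hu
  have hDpos : (0:ℝ) < (rT - dT) ^ 2 + 4 * s * rI / Tmax := by positivity
  have hupos : 0 < u := Real.sqrt_pos.2 hDpos
  have hu2 : u ^ 2 = (rT - dT) ^ 2 + 4 * s * rI / Tmax := Real.sq_sqrt hDpos.le
  set Tt : ℝ := hcvTtilde s rT rI dT Tmax with hTtdef
  have hTteq : Tt = Tmax / (2 * rI) * (u + rT - dT) := rfl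
  have h1 : rI ≠ 0 := ne_of_gt hrI
  have h2 : Tmax ≠ 0 := ne_of_gt hTmax
  have hu2' : u ^ 2 * Tmax = (rT - dT) ^ 2 * Tmax + 4 * s * rI := by
    field_simp at hu2 ⊢; linear_combination hu2
  -- the root identity : g(Tt) = 0
  have hroot : s + (rT - dT) * Tt - rI * Tt ^ 2 / Tmax = 0 := by
    rw [hTteq]; field_simp
    linear_combination (-1) * hu2'
  -- relation 2 rI Tt = Tmax (u + rT - dT)
  have hTtslope : 2 * rI * Tt = Tmax * (u + rT - dT) := by
    rw [hTteq]; field_simp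
  -- u + rT - dT > 0
  have hk : 0 < u + rT - dT := by
    by_contra h
    push_neg at h
    have hle : u ≤ dT - rT := by linarith
    have h0 : 0 ≤ dT - rT - u := by linarith
    have h0' : 0 ≤ dT - rT + u := by linarith
    nlinarith [mul_nonneg (mul_nonneg h0 h0') hTmax.le, mul_pos hs hrI]
  have hTtpos : 0 < Tt := by
    rw [hTteq]; exact mul_pos (by positivity) hk
  -- g is strictly negative beyond the root
  have hgneg : ∀ e : ℝ, 0 < e →
      s + (rT - dT) * (Tt + e) - rI * (Tt + e) ^ 2 / Tmax < 0 := by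
    intro e he
    have hexp : s + (rT - dT)*(Tt + e) - rI*(Tt + e)^2/Tmax
        = (s + (rT - dT)*Tt - rI*Tt^2/Tmax) - e*u - rI*e^2/Tmax := by
      field_simp
      linear_combination (-e) * hTtslope
    rw [hexp, hroot]
    have : 0 < e*u + rI*e^2/Tmax := by positivity
    linarith
  -- Part 1: T + I ≤ Tt on [t₀, ∞)
  have hN : ∀ t ∈ Ici t₀, T t + I t ≤ Tt := by
    intro b hb
    have hble : t₀ ≤ b := hb
    refine le_of_forall_pos_le_add ?_
    intro e he
    have hcont : ContinuousOn (fun x => T x + I x) (Icc t₀ b) := fun x hx =>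
      (((hsol x hx.1).1.add (hsol x hx.1).2.1).continuousWithinAt).mono
        Icc_subset_Ici_self
    have key := image_le_of_deriv_right_lt_deriv_boundary (a := t₀) (b := b)
      (f := fun x => T x + I x)
      (f' := fun x =>
        (s + rT * T x * (1 - (T x + I x) / Tmax) - dT * T x
          - (1 - η) * β * V x * T x + q * I x) +
        (rI * I x * (1 - (T x + I x) / Tmax) + (1 - η) * β * V x * T x
          - dI * I x - q * I x))
      (B := fun _ => Tt + e) (B' := fun _ => 0)
      hcont
      (fun x hx => (((hsol x hx.1).1.add (hsol x hx.1).2.1).mono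
        (Ici_subset_Ici.2 hx.1)))
      (by show T t₀ + I t₀ ≤ Tt + e; linarith)
      (fun x => hasDerivAt_const x _)
      ?_
    · have := key (right_mem_Icc.2 hble)
      linarith [this]
    · intro x hx heq
      obtain ⟨hT, hI, hV⟩ := hpos x hx.1
      have hNx : T x + I x = Tt + e := heq
      -- the derivative equals s + (1 - N/Tmax)(rT T + rI I) - dT T - dI I
      have hder : (s + rT * T x * (1 - (T x + I x) / Tmax) - dT * T x
          - (1 - η) * β * V x * T x + q * I x) +
        (rI * I x * (1 - (T x + I x) / Tmax) + (1 - η) * β * V x * T x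
          - dI * I x - q * I x)
          = s + ((1 - (T x + I x)/Tmax)*(rT*T x + rI*I x) - dT*T x - dI*I x) := by
        ring
      have hid : (rT - dT)*(T x + I x) - rI*(T x + I x)^2/Tmax
          - ((1 - (T x + I x)/Tmax)*(rT*T x + rI*I x) - dT*T x - dI*I x)
          = (rT - rI)*I x + (dI - dT)*I x + (T x + I x)*T x*(rT - rI)/Tmax := by
        field_simp; ring
      have hnn1 : 0 ≤ (rT - rI)*I x := mul_nonneg (by linarith) hI.le
      have hnn2 : 0 ≤ (dI - dT)*I x := mul_nonneg (by linarith) hI.le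
      have hnn3 : 0 ≤ (T x + I x)*T x*(rT - rI)/Tmax := by
        apply div_nonneg _ hTmax.le
        exact mul_nonneg (mul_nonneg (by linarith) hT.le) (by linarith)
      have hg := hgneg e he
      rw [← hNx] at hg
      linarith [hder, hid, hnn1, hnn2, hnn3, hg]
  -- Part 2: V ≤ λ₀ on [t₀, ∞)
  set lam : ℝ := max (V t₀) ((1 - ε) * p * Tt / c) with hlam
  have hlamge : (1 - ε) * p * Tt / c ≤ lam := le_max_right _ _
  have hVb : ∀ t ∈ Ici t₀, V t ≤ lam := by
    intro b hb
    have hble : t₀ ≤ b := hb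
    refine le_of_forall_pos_le_add ?_
    intro e he
    have hcont : ContinuousOn V (Icc t₀ b) := fun x hx =>
      ((hsol x hx.1).2.2.continuousWithinAt).mono Icc_subset_Ici_self
    have key := image_le_of_deriv_right_lt_deriv_boundary (a := t₀) (b := b)
      (f := V) (f' := fun x => (1 - ε) * p * I x - c * V x)
      (B := fun _ => lam + e) (B' := fun _ => 0)
      hcont
      (fun x hx => ((hsol x hx.1).2.2.mono (Ici_subset_Ici.2 hx.1)))
      (by
        show V t₀ ≤ lam + e
        have : V t₀ ≤ lam := le_max_left _ _
        linarith)
      (fun x => hasDerivAt_const x _)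
      ?_
    · have := key (right_mem_Icc.2 hble)
      linarith [this]
    · intro x hx heq
      obtain ⟨hT, hI, hV⟩ := hpos x hx.1
      have hIle : I x ≤ Tt := by
        have := hN x hx.1
        linarith
      have h1ε : 0 < 1 - ε := by linarith
      have hclam : (1 - ε) * p * Tt ≤ c * lam := by
        calc (1 - ε) * p * Tt = c * ((1 - ε) * p * Tt / c) := by field_simp
        _ ≤ c * lam := mul_le_mul_of_nonneg_left hlamge hc.le
      have hI2 : (1 - ε) * p * I x ≤ (1 - ε) * p * Tt :=
        mul_le_mul_of_nonneg_left hIle (by positivity)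
      have hVx : V x = lam + e := heq
      rw [hVx]
      have := mul_pos hc he
      linarith
  intro t ht
  exact ⟨hN t ht, hVb t ht⟩
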